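/- In the setting of the previous statement, the three bivectors ξ₁' = x∧u + y∧v, ξ₂' = x∧v - y∧u, ξ₃' = x∧v + y∧u are mutually orthogonal, each of norm √2, and ⟨ρ ξ₁', ξ₁'⟩ + ⟨ρ ξ₂', ξ₂'⟩ + ⟨ρ ξ₃', ξ₃'⟩ = -α < 0. Consequently, the curvature operator ρ is not 3-nonnegative. -/

import Mathlib

open scoped RealInnerProductSpace

/-- Setting as in the previous statement (with moreover v ⊥ u).  The three bivectors
ξ₁ = x∧u + y∧v, ξ₂ = x∧v - y∧u, ξ₃ = x∧v + y∧u are mutually orthogonal of norm √2,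
the sum of the quadratic form of the curvature operator ρ over them equals
-α = -‖R(x,y)u‖ < 0, and consequently ρ is not 3-nonnegative: there is an orthonormal
triple of bivectors on which the quadratic form of ρ sums to a negative number. -/
theorem stmt11 {V : Type*} [NormedAddCommGroup V] [InnerProductSpace ℝ V] [FiniteDimensional ℝ V] (Sig : Submodule ℝ V)
    (R : V →ₗ[ℝ] V →ₗ[ℝ] V →ₗ[ℝ] V)
    (hanti1 : ∀ x y, R x y = - R y x)
    (hanti2 : ∀ x y z w, ⟪R x y z, w⟫ = - ⟪R x y w, z⟫)
    (hpair : ∀ x y z w, ⟪R x y z, w⟫ = ⟪R z w x, y⟫)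
    (hbianchi : ∀ x y z, R x y z + R y z x + R z x y = 0)
    (hnonneg : ∀ x y, 0 ≤ ⟪R x y y, x⟫)
    (hflat : ∀ z ∈ Sig, ∀ u ∈ Sigᗮ, R z u z = 0)
    {Λ : Type*} [NormedAddCommGroup Λ] [InnerProductSpace ℝ Λ]
    (ω : V →ₗ[ℝ] V →ₗ[ℝ] Λ)
    (hωinner : ∀ x y z w : V, ⟪ω x y, ω z w⟫ = ⟪x, z⟫ * ⟪y, w⟫ - ⟪x, w⟫ * ⟪y, z⟫)
    (ρ : Λ →ₗ[ℝ] Λ) (hρsym : ρ.IsSymmetric)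
    (hρ : ∀ x y z w : V, ⟪ρ (ω x y), ω z w⟫ = ⟪R x y w, z⟫)
    (x : V) (hx : x ∈ Sig) (y : V) (hy : y ∈ Sig)
    (hxy : Orthonormal ℝ (![x, y]))
    (u : V) (hu : u ∈ Sigᗮ) (hu1 : ‖u‖ = 1)
    (hR0 : R x y u ≠ 0) (hRperp : R x y u ∈ Sigᗮ)
    (v : V) (hv : v = ‖R x y u‖⁻¹ • R x y u) (huv : ⟪u, v⟫ = 0) :
    (⟪ω x u + ω y v, ω x v - ω y u⟫ = 0 ∧
      ⟪ω x u + ω y v, ω x v + ω y u⟫ = 0 ∧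
      ⟪ω x v - ω y u, ω x v + ω y u⟫ = 0) ∧
    (‖ω x u + ω y v‖ = Real.sqrt 2 ∧ ‖ω x v - ω y u‖ = Real.sqrt 2 ∧
      ‖ω x v + ω y u‖ = Real.sqrt 2) ∧
    (⟪ρ (ω x u + ω y v), ω x u + ω y v⟫ + ⟪ρ (ω x v - ω y u), ω x v - ω y u⟫ +
      ⟪ρ (ω x v + ω y u), ω x v + ω y u⟫ = -‖R x y u‖ ∧ -‖R x y u‖ < 0) ∧
    ¬ (∀ ξ : Fin 3 → Λ, Orthonormal ℝ ξ → 0 ≤ ∑ i : Fin 3, ⟪ρ (ξ i), ξ i⟫) := by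
  -- basic scalar products
  have hx1 : ‖x‖ = 1 := by simpa using hxy.1 0
  have hy1 : ‖y‖ = 1 := by simpa using hxy.1 1
  have hxxi : ⟪x, x⟫ = 1 := by rw [real_inner_self_eq_norm_sq, hx1]; norm_num
  have hyyi : ⟪y, y⟫ = 1 := by rw [real_inner_self_eq_norm_sq, hy1]; norm_num
  have hxyi : ⟪x, y⟫ = 0 := by simpa using hxy.2 (show (0 : Fin 2) ≠ 1 by decide)
  have hyxi : ⟪y, x⟫ = 0 := by rw [real_inner_comm]; exact hxyi
  set α : ℝ := ‖R x y u‖ with hα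
  have hαpos : 0 < α := norm_pos_iff.mpr hR0
  have hvperp : v ∈ Sigᗮ := hv ▸ Submodule.smul_mem _ _ hRperp
  have hv1 : ‖v‖ = 1 := by
    rw [hv, norm_smul, norm_inv, norm_norm]
    exact inv_mul_cancel₀ hαpos.ne'
  have huui : ⟪u, u⟫ = 1 := by rw [real_inner_self_eq_norm_sq, hu1]; norm_num
  have hvvi : ⟪v, v⟫ = 1 := by rw [real_inner_self_eq_norm_sq, hv1]; norm_num
  have hvu : ⟪v, u⟫ = 0 := by rw [real_inner_comm]; exact huv
  have hortho : ∀ z ∈ Sig, ∀ w ∈ Sigᗮ, ⟪z, w⟫ = 0 := fun z hz w hw =>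
    (Submodule.mem_orthogonal Sig w).mp hw z hz
  have hxu : ⟪x, u⟫ = 0 := hortho x hx u hu
  have hxv : ⟪x, v⟫ = 0 := hortho x hx v hvperp
  have hyu : ⟪y, u⟫ = 0 := hortho y hy u hu
  have hyv : ⟪y, v⟫ = 0 := hortho y hy v hvperp
  have hux : ⟪u, x⟫ = 0 := by rw [real_inner_comm]; exact hxu
  have hvx : ⟪v, x⟫ = 0 := by rw [real_inner_comm]; exact hxv
  have huy : ⟪u, y⟫ = 0 := by rw [real_inner_comm]; exact hyu
  have hvy : ⟪v, y⟫ = 0 := by rw [real_inner_comm]; exact hyv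
  -- Gram computations
  have e12 : ⟪ω x u + ω y v, ω x v - ω y u⟫ = 0 := by
    simp [inner_add_left, inner_sub_right, hωinner, hxxi, hyyi, hxyi, hyxi, huui, hvvi,
      huv, hvu, hxu, hxv, hyu, hyv, hux, hvx, huy, hvy]
  have e13 : ⟪ω x u + ω y v, ω x v + ω y u⟫ = 0 := by
    simp [inner_add_left, inner_add_right, hωinner, hxxi, hyyi, hxyi, hyxi, huui, hvvi,
      huv, hvu, hxu, hxv, hyu, hyv, hux, hvx, huy, hvy]
  have e23 : ⟪ω x v - ω y u, ω x v + ω y u⟫ = 0 := by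
    simp [-inner_self_eq_norm_sq_to_K, inner_sub_left, inner_add_right, hωinner, hxxi, hyyi, hxyi, hyxi, huui, hvvi,
      huv, hvu, hxu, hxv, hyu, hyv, hux, hvx, huy, hvy]
  have n1i : ⟪ω x u + ω y v, ω x u + ω y v⟫ = 2 := by
    simp [-inner_self_eq_norm_sq_to_K, inner_add_left, inner_add_right, hωinner, hxxi, hyyi, hxyi, hyxi, huui, hvvi,
      huv, hvu, hxu, hxv, hyu, hyv, hux, hvx, huy, hvy]
    norm_num
  have n2i : ⟪ω x v - ω y u, ω x v - ω y u⟫ = 2 := by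
    simp [-inner_self_eq_norm_sq_to_K, inner_sub_left, inner_sub_right, hωinner, hxxi, hyyi, hxyi, hyxi, huui, hvvi,
      huv, hvu, hxu, hxv, hyu, hyv, hux, hvx, huy, hvy]
    norm_num
  have n3i : ⟪ω x v + ω y u, ω x v + ω y u⟫ = 2 := by
    simp [-inner_self_eq_norm_sq_to_K, inner_add_left, inner_add_right, hωinner, hxxi, hyyi, hxyi, hyxi, huui, hvvi,
      huv, hvu, hxu, hxv, hyu, hyv, hux, hvx, huy, hvy]
    norm_num
  have nrm : ∀ ξ : Λ, ⟪ξ, ξ⟫ = 2 → ‖ξ‖ = Real.sqrt 2 := by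
    intro ξ hξ
    rw [show (2 : ℝ) = ‖ξ‖ ^ 2 by rw [← real_inner_self_eq_norm_sq, hξ],
      Real.sqrt_sq (norm_nonneg _)]
  have n1 := nrm _ n1i
  have n2 := nrm _ n2i
  have n3 := nrm _ n3i
  -- flatness consequences
  have flat2 : ∀ z ∈ Sig, ∀ z' ∈ Sig, ∀ w ∈ Sigᗮ, R z w z' = - R z' w z := by
    intro z hz z' hz' w hw
    have h := hflat (z + z') (Sig.add_mem hz hz') w hw
    have h1 := hflat z hz w hw
    have h2 := hflat z' hz' w hw
    simp only [map_add, LinearMap.add_apply, h1, h2, zero_add, add_zero] at h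
    exact eq_neg_of_add_eq_zero_right h
  have diag : ∀ z ∈ Sig, ∀ w ∈ Sigᗮ, ⟪R z w w, z⟫ = 0 := by
    intro z hz w hw
    have h0 : R z w z = 0 := hflat z hz w hw
    rw [hpair z w w z, hanti1 w z]
    simp [h0]
  -- ⟪R x y u, v⟫ = α
  have key1 : ⟪R x y u, v⟫ = α := by
    rw [hv, real_inner_smul_right, real_inner_self_eq_norm_sq, ← hα, sq]
    field_simp
  -- the main curvature term
  have hB : ⟪R x v u, y⟫ = - ⟪R x u v, y⟫ := by
    rw [hanti2 x v u y, flat2 x hx y hy v hvperp]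
    simp only [LinearMap.neg_apply, inner_neg_left, neg_neg, map_neg]
    rw [hpair y v x u, hanti2 x u y v]
  have hT1 : ⟪R x u v, y⟫ = -(α / 2) := by
    have hb := hbianchi x u v
    have hb' : ⟪R x u v, y⟫ + ⟪R u v x, y⟫ + ⟪R v x u, y⟫ = 0 := by
      have : ⟪R x u v + R u v x + R v x u, y⟫ = ⟪(0 : V), y⟫ := by rw [hb]
      simpa [inner_add_left] using this
    have h2 : ⟪R u v x, y⟫ = α := by rw [hpair u v x y]; exact key1
    have h3 : ⟪R v x u, y⟫ = ⟪R x u v, y⟫ := by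
      rw [hanti1 v x]
      simp only [LinearMap.neg_apply, inner_neg_left, map_neg]
      rw [hB]
      ring_nf
    linear_combination hb' / 2 - h2 / 2 - h3 / 2
  have hT2 : ⟪R y v u, x⟫ = -(α / 2) := by
    rw [hpair y v u x, hanti1 u x]
    simp only [LinearMap.neg_apply, inner_neg_left, map_neg, neg_neg]
    rw [show -⟪R x u y, v⟫ = ⟪R x u v, y⟫ by rw [hanti2 x u y v]; ring, hT1]
  have hBval : ⟪R x v u, y⟫ = α / 2 := by rw [hB, hT1]; ring
  have hC : ⟪R y u v, x⟫ = α / 2 := by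
    rw [hpair y u v x, hanti1 v x]
    simp only [LinearMap.neg_apply, inner_neg_left, map_neg, neg_neg]
    rw [hanti2 x v y u, neg_neg]
    exact hBval
  -- quadratic form values
  have Q1 : ⟪ρ (ω x u + ω y v), ω x u + ω y v⟫ = -α := by
    rw [map_add, inner_add_left, inner_add_right, inner_add_right, hρ, hρ, hρ, hρ,
      diag x hx u hu, diag y hy v hvperp, hT1, hT2]
    ring
  have Q2 : ⟪ρ (ω x v - ω y u), ω x v - ω y u⟫ = -α := by
    rw [map_sub, inner_sub_left, inner_sub_right, inner_sub_right, hρ, hρ, hρ, hρ,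
      diag x hx v hvperp, diag y hy u hu, hBval, hC]
    ring
  have Q3 : ⟪ρ (ω x v + ω y u), ω x v + ω y u⟫ = α := by
    rw [map_add, inner_add_left, inner_add_right, inner_add_right, hρ, hρ, hρ, hρ,
      diag x hx v hvperp, diag y hy u hu, hBval, hC]
    ring
  have Qsum : ⟪ρ (ω x u + ω y v), ω x u + ω y v⟫ + ⟪ρ (ω x v - ω y u), ω x v - ω y u⟫ +
      ⟪ρ (ω x v + ω y u), ω x v + ω y u⟫ = -α := by
    rw [Q1, Q2, Q3]; ring
  refine ⟨⟨e12, e13, e23⟩, ⟨n1, n2, n3⟩, ⟨Qsum, neg_lt_zero.mpr hαpos⟩, ?_⟩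
  intro hconc
  have hs2 : (0 : ℝ) < Real.sqrt 2 := Real.sqrt_pos.mpr (by norm_num)
  set c : ℝ := (Real.sqrt 2)⁻¹ with hc
  have hcpos : 0 < c := inv_pos.mpr hs2
  set ξ : Fin 3 → Λ := ![c • (ω x u + ω y v), c • (ω x v - ω y u), c • (ω x v + ω y u)] with hξ
  have e21 : ⟪ω x v - ω y u, ω x u + ω y v⟫ = 0 := by rw [real_inner_comm]; exact e12
  have e31 : ⟪ω x v + ω y u, ω x u + ω y v⟫ = 0 := by rw [real_inner_comm]; exact e13
  have e32 : ⟪ω x v + ω y u, ω x v - ω y u⟫ = 0 := by rw [real_inner_comm]; exact e23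
  have hξ0 : ξ 0 = c • (ω x u + ω y v) := rfl
  have hξ1 : ξ 1 = c • (ω x v - ω y u) := rfl
  have hξ2 : ξ 2 = c • (ω x v + ω y u) := rfl
  have hinner0 : ∀ a b : Λ, ⟪a, b⟫ = 0 → ⟪c • a, c • b⟫ = 0 := by
    intro a b h
    rw [real_inner_smul_left, real_inner_smul_right, h]
    ring
  have hnorm1 : ∀ a : Λ, ‖a‖ = Real.sqrt 2 → ‖c • a‖ = 1 := by
    intro a h
    rw [norm_smul, Real.norm_eq_abs, abs_of_pos hcpos, h]
    exact inv_mul_cancel₀ hs2.ne'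
  have hon : Orthonormal ℝ ξ := by
    constructor
    · intro i
      fin_cases i
      · exact hnorm1 _ n1
      · exact hnorm1 _ n2
      · exact hnorm1 _ n3
    · intro i j hij
      fin_cases i <;> fin_cases j
      · exact absurd rfl hij
      · exact hinner0 _ _ e12
      · exact hinner0 _ _ e13
      · exact hinner0 _ _ e21
      · exact absurd rfl hij
      · exact hinner0 _ _ e23
      · exact hinner0 _ _ e31
      · exact hinner0 _ _ e32
      · exact absurd rfl hij
  have hge := hconc ξ hon
  have hsum : ∑ i : Fin 3, ⟪ρ (ξ i), ξ i⟫ = c ^ 2 * (-α) := by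
    rw [Fin.sum_univ_three, hξ0, hξ1, hξ2]
    simp only [map_smul, real_inner_smul_left, real_inner_smul_right]
    rw [Q1, Q2, Q3]
    ring
  rw [hsum] at hge
  have hlt : c ^ 2 * (-α) < 0 := by
    rw [mul_neg]
    exact neg_lt_zero.mpr (mul_pos (pow_pos hcpos 2) hαpos)
  exact absurd hge (not_le.mpr hlt)
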